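/- arXiv:2308.04009 — 2 statements merged into one kernel-verified Lean document; each statement's English description precedes it below -/
import Mathlib

section
/- Let h : ℝⁿ → ℝ be continuously differentiable with 0-superlevel set C = {x : h(x) ≥ 0}, and let φ : [0, t_max) → ℝⁿ be a solution of ẋ = f(x) with φ(0) ∈ C. If there exists a locally Lipschitz α ∈ 𝒦∞ᵉ such that (d/dt) h(φ(t)) ≥ -α(h(φ(t))) for all t, then h(φ(t)) ≥ 0 for all t ∈ [0, t_max), i.e., C is forward invariant along φ. -/
/-- Barrier function forward invariance: if `h` is continuously differentiable,
`φ` solves `ẋ = f(x)` on `[0, t_max)` with `h(φ(0)) ≥ 0`, and there is a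
locally Lipschitz extended class-`𝒦∞` function `α` (strictly increasing,
continuous, `α 0 = 0`, unbounded above and below) such that
`(d/dt) h(φ(t)) = ∇h(φ(t))⋅f(φ(t)) ≥ -α(h(φ(t)))`, then `h(φ(t)) ≥ 0`
for all `t ∈ [0, t_max)`, i.e. `C = {x | h x ≥ 0}` is forward invariant. -/
theorem stmt_8 (n : ℕ) (h : (Fin n → ℝ) → ℝ) (hreg : ContDiff ℝ 1 h)
    (f : (Fin n → ℝ) → (Fin n → ℝ)) (tmax : ℝ) (φ : ℝ → Fin n → ℝ)
    (hφ : ∀ t ∈ Set.Ico (0 : ℝ) tmax, HasDerivAt φ (f (φ t)) t)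
    (hφ0 : 0 ≤ h (φ 0))
    (α : ℝ → ℝ) (hα_lip : LocallyLipschitz α) (hα_mono : StrictMono α)
    (hα_cont : Continuous α) (hα0 : α 0 = 0)
    (hα_top : Filter.Tendsto α Filter.atTop Filter.atTop)
    (hα_bot : Filter.Tendsto α Filter.atBot Filter.atBot)
    (hbar : ∀ t ∈ Set.Ico (0 : ℝ) tmax,
      -α (h (φ t)) ≤ fderiv ℝ h (φ t) (f (φ t))) :
    ∀ t ∈ Set.Ico (0 : ℝ) tmax, 0 ≤ h (φ t) := by
  set y : ℝ → ℝ := fun t => h (φ t) with hy_def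
  -- derivative of y on [0, tmax)
  have hy : ∀ t ∈ Set.Ico (0 : ℝ) tmax,
      HasDerivAt y (fderiv ℝ h (φ t) (f (φ t))) t := by
    intro t ht
    exact ((hreg.differentiable one_ne_zero).differentiableAt.hasFDerivAt).comp_hasDerivAt
      t (hφ t ht)
  intro t₀ ht₀
  by_contra hneg
  push_neg at hneg
  have ht₀0 : 0 ≤ t₀ := ht₀.1
  have ht₀max : t₀ < tmax := ht₀.2
  -- continuity of y on [0, t₀]
  have hysub : Set.Icc (0:ℝ) t₀ ⊆ Set.Ico (0:ℝ) tmax := fun s hs =>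
    ⟨hs.1, lt_of_le_of_lt hs.2 ht₀max⟩
  have hycont : ContinuousOn y (Set.Icc 0 t₀) := fun s hs =>
    ((hy s (hysub hs)).continuousAt).continuousWithinAt
  -- the set of zeros of y in [0, t₀]
  set S : Set ℝ := Set.Icc 0 t₀ ∩ y ⁻¹' {0} with hS_def
  have hSne : S.Nonempty := by
    have h0 : (0:ℝ) ∈ Set.Icc (y t₀) (y 0) := ⟨le_of_lt hneg, hφ0⟩
    have := intermediate_value_Icc' ht₀0 hycont h0
    obtain ⟨s, hs, hys⟩ := this
    exact ⟨s, hs, hys⟩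
  have hSbdd : BddAbove S := BddAbove.mono Set.inter_subset_left (bddAbove_Icc)
  have hSclosed : IsClosed S := by
    have : IsClosed (Set.Icc (0:ℝ) t₀) := isClosed_Icc
    exact hycont.preimage_isClosed_of_isClosed this isClosed_singleton
  set t₁ : ℝ := sSup S with ht₁_def
  have ht₁S : t₁ ∈ S := hSclosed.csSup_mem hSne hSbdd
  have hyt₁ : y t₁ = 0 := ht₁S.2
  have ht₁mem : t₁ ∈ Set.Icc (0:ℝ) t₀ := ht₁S.1
  have ht₁lt : t₁ < t₀ := lt_of_le_of_ne ht₁mem.2 (by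
    intro hEq; rw [hEq] at hyt₁; exact absurd hyt₁ (ne_of_lt hneg))
  -- y is negative on (t₁, t₀]
  have hyneg : ∀ s ∈ Set.Ioc t₁ t₀, y s < 0 := by
    intro s hs
    by_contra hpos
    push_neg at hpos
    have hs0 : 0 ≤ s := le_trans ht₁mem.1 (le_of_lt hs.1)
    have hcont' : ContinuousOn y (Set.Icc s t₀) :=
      hycont.mono (Set.Icc_subset_Icc hs0 le_rfl)
    have h0 : (0:ℝ) ∈ Set.Icc (y t₀) (y s) := ⟨le_of_lt hneg, hpos⟩
    obtain ⟨s', hs', hys'⟩ := intermediate_value_Icc' hs.2 hcont' h0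
    have hs'S : s' ∈ S := ⟨⟨le_trans hs0 hs'.1, hs'.2⟩, hys'⟩
    have : s' ≤ t₁ := le_csSup hSbdd hs'S
    exact absurd (lt_of_lt_of_le hs.1 hs'.1) (not_lt.mpr this)
  -- strictly positive derivative on (t₁, t₀)
  have hderiv_pos : ∀ s ∈ Set.Ioo t₁ t₀, 0 < deriv y s := by
    intro s hs
    have hsmem : s ∈ Set.Ico (0:ℝ) tmax :=
      ⟨le_trans ht₁mem.1 (le_of_lt hs.1), lt_trans hs.2 ht₀max⟩
    have hds := hy s hsmem
    rw [hds.deriv]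
    have h1 : α (y s) < 0 := by
      have := hα_mono (hyneg s ⟨hs.1, le_of_lt hs.2⟩)
      rwa [hα0] at this
    calc (0:ℝ) < -α (y s) := by linarith
    _ ≤ fderiv ℝ h (φ s) (f (φ s)) := hbar s hsmem
  -- y strictly monotone on [t₁, t₀]
  have hmono : StrictMonoOn y (Set.Icc t₁ t₀) := by
    apply strictMonoOn_of_deriv_pos (convex_Icc t₁ t₀)
      (hycont.mono (Set.Icc_subset_Icc ht₁mem.1 le_rfl))
    intro s hs
    rw [interior_Icc] at hs
    exact hderiv_pos s hs
  have : y t₁ < y t₀ := hmono (Set.left_mem_Icc.mpr (le_of_lt ht₁lt))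
    (Set.right_mem_Icc.mpr (le_of_lt ht₁lt)) ht₁lt
  rw [hyt₁] at this
  linarith
end

section
/- Let C = {x ∈ ℝⁿ : h(x) ≥ 0} for continuously differentiable h, and suppose k : ℝⁿ → ℝᵐ is a controller satisfying ∇h(x) · (f(x) + g(x)k(x)) ≥ -α(h(x)) for all x, with α ∈ 𝒦∞ᵉ locally Lipschitz and f, g, k locally Lipschitz. Then for any solution φ of the closed-loop system ẋ = f(x) + g(x)k(x) with φ(0) ∈ C, φ(t) ∈ C for all t in its maximal interval of existence. -/
open Matrix

attribute [local instance] Matrix.normedAddCommGroup Matrix.normedSpace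

/-- CBF safety theorem: if the locally Lipschitz controller `k` satisfies
`∇h(x) ⋅ (f(x) + g(x) k(x)) ≥ -α(h(x))` for all `x`, with `α` an extended
class-`𝒦∞` function, then every solution `φ` of the closed-loop system
`ẋ = f(x) + g(x)k(x)` starting in `C = {x | h x ≥ 0}` stays in `C`. -/
theorem stmt_15 (n m : ℕ) (h : (Fin n → ℝ) → ℝ) (hreg : ContDiff ℝ 1 h)
    (f : (Fin n → ℝ) → (Fin n → ℝ)) (g : (Fin n → ℝ) → Matrix (Fin n) (Fin m) ℝ)
    (k : (Fin n → ℝ) → (Fin m → ℝ))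
    (hf : LocallyLipschitz f) (hg : LocallyLipschitz g) (hk : LocallyLipschitz k)
    (α : ℝ → ℝ) (hα_lip : LocallyLipschitz α) (hα_mono : StrictMono α)
    (hα_cont : Continuous α) (hα0 : α 0 = 0)
    (hα_top : Filter.Tendsto α Filter.atTop Filter.atTop)
    (hα_bot : Filter.Tendsto α Filter.atBot Filter.atBot)
    (hsafe : ∀ x : Fin n → ℝ,
      -α (h x) ≤ fderiv ℝ h x (f x + (g x).mulVec (k x)))
    (tmax : ℝ) (φ : ℝ → Fin n → ℝ)
    (hφ : ∀ t ∈ Set.Ico (0 : ℝ) tmax,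
      HasDerivAt φ (f (φ t) + (g (φ t)).mulVec (k (φ t))) t)
    (hφ0 : 0 ≤ h (φ 0)) :
    ∀ t ∈ Set.Ico (0 : ℝ) tmax, 0 ≤ h (φ t) := by
  set y : ℝ → ℝ := fun t => h (φ t) with hy
  -- derivative of y along the flow
  have hyd : ∀ t ∈ Set.Ico (0 : ℝ) tmax,
      HasDerivAt y (fderiv ℝ h (φ t) (f (φ t) + (g (φ t)).mulVec (k (φ t)))) t := by
    intro t ht
    exact ((hreg.differentiable one_ne_zero (φ t)).hasFDerivAt).comp_hasDerivAt t (hφ t ht)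
  by_contra hcon
  push_neg at hcon
  obtain ⟨t₀, ht₀, hyt₀⟩ := hcon
  have ht₀0 : (0:ℝ) ≤ t₀ := ht₀.1
  have ht₀max : t₀ < tmax := ht₀.2
  have hsub : Set.Icc (0:ℝ) t₀ ⊆ Set.Ico (0:ℝ) tmax := fun t ht =>
    ⟨ht.1, lt_of_le_of_lt ht.2 ht₀max⟩
  have hycont : ContinuousOn y (Set.Icc 0 t₀) := fun t ht =>
    ((hyd t (hsub ht)).continuousAt).continuousWithinAt
  set S : Set ℝ := {s | s ∈ Set.Icc (0:ℝ) t₀ ∧ 0 ≤ y s} with hS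
  have hSne : S.Nonempty := ⟨0, ⟨le_rfl, ht₀0⟩, hφ0⟩
  have hScomp : IsCompact S := by
    have hclosed : IsClosed S := by
      have : S = Set.Icc (0:ℝ) t₀ ∩ y ⁻¹' Set.Ici 0 := by
        ext s; simp [hS, Set.mem_inter_iff, and_comm]
      rw [this]
      exact (hycont.preimage_isClosed_of_isClosed isClosed_Icc isClosed_Ici)
    exact (isCompact_Icc (a := (0:ℝ)) (b := t₀)).of_isClosed_subset hclosed
      (fun s hs => hs.1)
  obtain ⟨s, hsS, hsmax⟩ := hScomp.exists_isGreatest hSne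
  have hs0 : (0:ℝ) ≤ s := hsS.1.1
  have hst₀ : s ≤ t₀ := hsS.1.2
  have hys : 0 ≤ y s := hsS.2
  have hslt : s < t₀ := lt_of_le_of_ne hst₀ (by rintro rfl; exact absurd hys (not_le.mpr hyt₀))
  -- on (s, t₀], y < 0
  have hneg : ∀ t ∈ Set.Ioc s t₀, y t < 0 := by
    intro t ht
    by_contra hge
    push_neg at hge
    exact absurd (hsmax ⟨⟨hs0.trans ht.1.le, ht.2⟩, hge⟩) (not_le.mpr ht.1)
  -- y is monotone on [s, t₀]
  have hmono : MonotoneOn y (Set.Icc s t₀) := by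
    apply monotoneOn_of_deriv_nonneg (convex_Icc s t₀)
      (hycont.mono (Set.Icc_subset_Icc hs0 le_rfl))
      (fun t ht => by
        rw [interior_Icc] at ht
        exact ((hyd t (hsub ⟨hs0.trans ht.1.le, ht.2.le⟩)).differentiableAt).differentiableWithinAt)
    intro t ht
    rw [interior_Icc] at ht
    have htI : t ∈ Set.Ico (0:ℝ) tmax := hsub ⟨hs0.trans ht.1.le, ht.2.le⟩
    rw [(hyd t htI).deriv]
    have hyt : y t < 0 := hneg t ⟨ht.1, ht.2.le⟩
    have : α (y t) ≤ 0 := by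
      have := hα_mono.monotone hyt.le
      simpa [hα0] using this
    have := hsafe (φ t)
    linarith
  have := hmono ⟨le_rfl, hslt.le⟩ ⟨hslt.le, le_rfl⟩ hslt.le
  linarith
end
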